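/- Domain generalization bound: Let Π be a policy class, {ρ^{e_i}}_{i=1}^N source joint distributions and ρ^t a target distribution. For unit-sum weights α define λ_α = min_{π'∈Π}[Σᵢ αᵢ ε^{e_i}(π'‖π_G) + ε^t(π'‖π_G)], and let ρ̃ be any element of the characteristic set B(δ_E, E|Π) minimizing d_{ΠΔΠ}(·, ρ^t). Then for every π ∈ Π and unit-sum α: ε^t(π‖π_G) ≤ Σᵢ αᵢ ε^{e_i}(π‖π_G) + λ_α + δ_E + d_{ΠΔΠ}(ρ̃, ρ^t), where δ_E = max_{i,j} d_{ΠΔΠ}(ρ^{e_i}, ρ^{e_j}). -/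

import Mathlib

open MeasureTheory

noncomputable def tvDist {A : Type*} [MeasurableSpace A] (μ ν : Measure A) : ℝ :=
  ⨆ s : {s : Set A // MeasurableSet s}, |(μ (s : Set A)).toReal - (ν (s : Set A)).toReal|

noncomputable def avgTV {X G A : Type*} [MeasurableSpace X] [MeasurableSpace G]
    [MeasurableSpace A] (ρ : Measure (X × G)) (π₁ π₂ : X → G → Measure A) : ℝ :=
  ∫ p, tvDist (π₁ p.1 p.2) (π₂ p.1 p.2) ∂ρ

noncomputable def dPiDeltaPi {X G A : Type*} [MeasurableSpace X] [MeasurableSpace G]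
    [MeasurableSpace A] (Pol : Set (X → G → Measure A)) (ρ ρ' : Measure (X × G)) : ℝ :=
  ⨆ pp : Pol × Pol, |avgTV ρ pp.1.1 pp.2.1 - avgTV ρ' pp.1.1 pp.2.1|

instance {A : Type*} [MeasurableSpace A] : Nonempty {s : Set A // MeasurableSet s} :=
  ⟨⟨∅, MeasurableSet.empty⟩⟩

lemma tvDist_nonneg' {A : Type*} [MeasurableSpace A] (μ ν : Measure A) : 0 ≤ tvDist μ ν :=
  Real.iSup_nonneg fun _ => abs_nonneg _

lemma tvDist_comm {A : Type*} [MeasurableSpace A] (μ ν : Measure A) :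
    tvDist μ ν = tvDist ν μ :=
  iSup_congr fun _ => abs_sub_comm _ _

lemma abs_term_le_one {A : Type*} [MeasurableSpace A] (μ ν : Measure A)
    [IsProbabilityMeasure μ] [IsProbabilityMeasure ν] (s : Set A) :
    |(μ s).toReal - (ν s).toReal| ≤ 1 := by
  have h1 : (μ s).toReal ≤ 1 := by
    have := prob_le_one (μ := μ) (s := s)
    simpa using ENNReal.toReal_mono ENNReal.one_ne_top this
  have h2 : (ν s).toReal ≤ 1 := by
    have := prob_le_one (μ := ν) (s := s)
    simpa using ENNReal.toReal_mono ENNReal.one_ne_top this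
  have h3 : 0 ≤ (μ s).toReal := ENNReal.toReal_nonneg
  have h4 : 0 ≤ (ν s).toReal := ENNReal.toReal_nonneg
  rw [abs_sub_le_iff]; constructor <;> linarith

lemma tvDist_bdd {A : Type*} [MeasurableSpace A] (μ ν : Measure A)
    [IsProbabilityMeasure μ] [IsProbabilityMeasure ν] :
    BddAbove (Set.range fun s : {s : Set A // MeasurableSet s} =>
      |(μ (s : Set A)).toReal - (ν (s : Set A)).toReal|) := by
  refine ⟨1, ?_⟩
  rintro x ⟨s, rfl⟩
  exact abs_term_le_one μ ν s

lemma tvDist_le_one {A : Type*} [MeasurableSpace A] (μ ν : Measure A)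
    [IsProbabilityMeasure μ] [IsProbabilityMeasure ν] : tvDist μ ν ≤ 1 :=
  ciSup_le fun s => abs_term_le_one μ ν s

lemma tvDist_triangle {A : Type*} [MeasurableSpace A] (μ ν κ : Measure A)
    [IsProbabilityMeasure μ] [IsProbabilityMeasure ν] [IsProbabilityMeasure κ] :
    tvDist μ κ ≤ tvDist μ ν + tvDist ν κ := by
  apply ciSup_le
  intro s
  have h1 : |(μ (s : Set A)).toReal - (ν (s : Set A)).toReal| ≤ tvDist μ ν :=
    le_ciSup (tvDist_bdd μ ν) s
  have h2 : |(ν (s : Set A)).toReal - (κ (s : Set A)).toReal| ≤ tvDist ν κ :=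
    le_ciSup (tvDist_bdd ν κ) s
  calc |(μ (s : Set A)).toReal - (κ (s : Set A)).toReal|
      ≤ |(μ (s : Set A)).toReal - (ν (s : Set A)).toReal| +
        |(ν (s : Set A)).toReal - (κ (s : Set A)).toReal| := abs_sub_le _ _ _
    _ ≤ tvDist μ ν + tvDist ν κ := add_le_add h1 h2

lemma avgTV_nonneg {X G A : Type*} [MeasurableSpace X] [MeasurableSpace G]
    [MeasurableSpace A] (ρ : Measure (X × G)) (π₁ π₂ : X → G → Measure A) :
    0 ≤ avgTV ρ π₁ π₂ :=
  integral_nonneg fun _ => tvDist_nonneg' _ _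

lemma avgTV_le_one {X G A : Type*} [MeasurableSpace X] [MeasurableSpace G]
    [MeasurableSpace A] (ρ : Measure (X × G)) [IsProbabilityMeasure ρ]
    (π₁ π₂ : X → G → Measure A)
    (h₁ : ∀ x g, IsProbabilityMeasure (π₁ x g)) (h₂ : ∀ x g, IsProbabilityMeasure (π₂ x g)) :
    avgTV ρ π₁ π₂ ≤ 1 := by
  have h := norm_integral_le_of_norm_le_const (μ := ρ) (C := 1)
    (f := fun p : X × G => tvDist (π₁ p.1 p.2) (π₂ p.1 p.2))
    (Filter.Eventually.of_forall fun p => by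
      haveI := h₁ p.1 p.2; haveI := h₂ p.1 p.2
      rw [Real.norm_eq_abs, abs_of_nonneg (tvDist_nonneg' _ _)]
      exact tvDist_le_one _ _)
  simp only [measure_univ, probReal_univ, ENNReal.toReal_one, mul_one] at h
  calc avgTV ρ π₁ π₂ ≤ |avgTV ρ π₁ π₂| := le_abs_self _
    _ ≤ 1 := h

lemma abs_avgTV_sub_le {X G A : Type*} [MeasurableSpace X] [MeasurableSpace G]
    [MeasurableSpace A] (Pol : Set (X → G → Measure A))
    (hPol : ∀ π' ∈ Pol, ∀ x g, IsProbabilityMeasure (π' x g))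
    (ρ ρ' : Measure (X × G)) [IsProbabilityMeasure ρ] [IsProbabilityMeasure ρ']
    (π₁ π₂ : X → G → Measure A) (h₁ : π₁ ∈ Pol) (h₂ : π₂ ∈ Pol) :
    |avgTV ρ π₁ π₂ - avgTV ρ' π₁ π₂| ≤ dPiDeltaPi Pol ρ ρ' := by
  have hbdd : BddAbove (Set.range fun pp : Pol × Pol =>
      |avgTV ρ pp.1.1 pp.2.1 - avgTV ρ' pp.1.1 pp.2.1|) := by
    refine ⟨2, ?_⟩
    rintro x ⟨pp, rfl⟩
    have hA : avgTV ρ pp.1.1 pp.2.1 ≤ 1 :=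
      avgTV_le_one ρ _ _ (hPol _ pp.1.2) (hPol _ pp.2.2)
    have hB : avgTV ρ' pp.1.1 pp.2.1 ≤ 1 :=
      avgTV_le_one ρ' _ _ (hPol _ pp.1.2) (hPol _ pp.2.2)
    have hA' := avgTV_nonneg ρ (pp.1.1 : X → G → Measure A) pp.2.1
    have hB' := avgTV_nonneg ρ' (pp.1.1 : X → G → Measure A) pp.2.1
    rw [abs_sub_le_iff]; constructor <;> linarith
  exact le_ciSup hbdd (⟨⟨π₁, h₁⟩, ⟨π₂, h₂⟩⟩ : Pol × Pol)
lemma avgTV_comm {X G A : Type*} [MeasurableSpace X] [MeasurableSpace G]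
    [MeasurableSpace A] (ρ : Measure (X × G)) (π₁ π₂ : X → G → Measure A) :
    avgTV ρ π₁ π₂ = avgTV ρ π₂ π₁ :=
  integral_congr_ae (Filter.Eventually.of_forall fun _ => tvDist_comm _ _)

lemma avgTV_triangle {X G A : Type*} [MeasurableSpace X] [MeasurableSpace G]
    [MeasurableSpace A] (ρ : Measure (X × G)) (π₁ π₂ π₃ : X → G → Measure A)
    (h₁ : ∀ x g, IsProbabilityMeasure (π₁ x g)) (h₂ : ∀ x g, IsProbabilityMeasure (π₂ x g))
    (h₃ : ∀ x g, IsProbabilityMeasure (π₃ x g))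
    (I13 : Integrable (fun p : X × G => tvDist (π₁ p.1 p.2) (π₃ p.1 p.2)) ρ)
    (I12 : Integrable (fun p : X × G => tvDist (π₁ p.1 p.2) (π₂ p.1 p.2)) ρ)
    (I23 : Integrable (fun p : X × G => tvDist (π₂ p.1 p.2) (π₃ p.1 p.2)) ρ) :
    avgTV ρ π₁ π₃ ≤ avgTV ρ π₁ π₂ + avgTV ρ π₂ π₃ := by
  rw [avgTV, avgTV, avgTV, ← integral_add I12 I23]
  refine integral_mono I13 (I12.add I23) fun p => ?_
  haveI := h₁ p.1 p.2; haveI := h₂ p.1 p.2; haveI := h₃ p.1 p.2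
  exact tvDist_triangle _ _ _

/-- domain generalization bound. For every `π ∈ Π` and unit-sum weights `α`:
`ε^t(π‖π_G) ≤ Σᵢ αᵢ ε^{e_i}(π‖π_G) + λ_α + δ_E + d_{ΠΔΠ}(ρ̃, ρ^t)`, where `λ_α` is the
weighted joint optimal error (attained by `πstar ∈ Π`), `δ_E` the maximal pairwise
ΠΔΠ-divergence between sources, and `ρ̃` an element of the characteristic set
`B(δ_E, E|Π)` minimizing the ΠΔΠ-divergence to `ρ^t`. -/
theorem domain_generalization_bound {X G A : Type*} [MeasurableSpace X] [MeasurableSpace G]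
    [MeasurableSpace A] {N : ℕ}
    (Pol : Set (X → G → Measure A))
    (hPol : ∀ π' ∈ Pol, ∀ x g, IsProbabilityMeasure (π' x g))
    (πG : X → G → Measure A) (hπG : ∀ x g, IsProbabilityMeasure (πG x g))
    (ρs : Fin N → Measure (X × G)) (hρs : ∀ i, IsProbabilityMeasure (ρs i))
    (ρt : Measure (X × G)) [IsProbabilityMeasure ρt]
    (α : Fin N → ℝ) (hα_nonneg : ∀ i, 0 ≤ α i) (hα_sum : ∑ i, α i = 1)
    -- δ_E : maximal pairwise divergence among sources
    (δE : ℝ) (hδE : δE = ⨆ i : Fin N, ⨆ j : Fin N, dPiDeltaPi Pol (ρs i) (ρs j))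
    -- πstar attains λ_α over Π
    (πstar : X → G → Measure A) (hπstar : πstar ∈ Pol)
    (hmin : ∀ π' ∈ Pol,
      (∑ i, α i * avgTV (ρs i) πstar πG) + avgTV ρt πstar πG ≤
        (∑ i, α i * avgTV (ρs i) π' πG) + avgTV ρt π' πG)
    -- ρ̃ lies in the characteristic set B(δ_E, E|Π) and minimizes the divergence to ρ^t
    (ρtil : Measure (X × G)) [IsProbabilityMeasure ρtil]
    (hρtil_mem : ∀ i, dPiDeltaPi Pol ρtil (ρs i) ≤ δE)
    (hρtil_min : ∀ ρ' : Measure (X × G),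
      (∀ i, dPiDeltaPi Pol ρ' (ρs i) ≤ δE) → IsProbabilityMeasure ρ' →
        dPiDeltaPi Pol ρtil ρt ≤ dPiDeltaPi Pol ρ' ρt)
    -- all relevant expectations are assumed finite
    (hInt : ∀ π₁ ∈ insert πG Pol, ∀ π₂ ∈ insert πG Pol,
      (∀ i, Integrable (fun p : X × G => tvDist (π₁ p.1 p.2) (π₂ p.1 p.2)) (ρs i)) ∧
      Integrable (fun p : X × G => tvDist (π₁ p.1 p.2) (π₂ p.1 p.2)) ρt ∧
      Integrable (fun p : X × G => tvDist (π₁ p.1 p.2) (π₂ p.1 p.2)) ρtil)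
    (π : X → G → Measure A) (hπ : π ∈ Pol) :
    avgTV ρt π πG ≤ (∑ i, α i * avgTV (ρs i) π πG) +
      ((∑ i, α i * avgTV (ρs i) πstar πG) + avgTV ρt πstar πG) +
      δE + dPiDeltaPi Pol ρtil ρt := by
  have hπ' : π ∈ insert πG Pol := Set.mem_insert_of_mem _ hπ
  have hπstar' : πstar ∈ insert πG Pol := Set.mem_insert_of_mem _ hπstar
  have hπG' : πG ∈ insert πG Pol := Set.mem_insert _ _
  have hπP := hPol π hπ
  have hπsP := hPol πstar hπstar
  -- Step A
  have hA : avgTV ρt π πG ≤ avgTV ρt π πstar + avgTV ρt πstar πG :=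
    avgTV_triangle ρt π πstar πG hπP hπsP hπG
      (hInt π hπ' πG hπG').2.1 (hInt π hπ' πstar hπstar').2.1 (hInt πstar hπstar' πG hπG').2.1
  -- Step B
  have hB : avgTV ρt π πstar ≤ avgTV ρtil π πstar + dPiDeltaPi Pol ρtil ρt := by
    have h := abs_avgTV_sub_le Pol hPol ρtil ρt π πstar hπ hπstar
    have := abs_le.1 h
    linarith [this.1, this.2]
  -- Step C+D : per-source bound
  have hCD : ∀ i, avgTV ρtil π πstar ≤
      avgTV (ρs i) π πG + avgTV (ρs i) πstar πG + δE := by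
    intro i
    haveI := hρs i
    have h1 : avgTV ρtil π πstar ≤ avgTV (ρs i) π πstar + dPiDeltaPi Pol ρtil (ρs i) := by
      have h := abs_avgTV_sub_le Pol hPol ρtil (ρs i) π πstar hπ hπstar
      have := abs_le.1 h
      linarith [this.1, this.2]
    have h2 : avgTV (ρs i) π πstar ≤ avgTV (ρs i) π πG + avgTV (ρs i) πG πstar :=
      avgTV_triangle (ρs i) π πG πstar hπP hπG hπsP
        ((hInt π hπ' πstar hπstar').1 i) ((hInt π hπ' πG hπG').1 i)
        ((hInt πG hπG' πstar hπstar').1 i)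
    have h3 : avgTV (ρs i) πG πstar = avgTV (ρs i) πstar πG := avgTV_comm _ _ _
    linarith [hρtil_mem i]
  -- combine over the α-average
  have hC : avgTV ρtil π πstar ≤
      (∑ i, α i * avgTV (ρs i) π πG) + (∑ i, α i * avgTV (ρs i) πstar πG) + δE := by
    have h1 : avgTV ρtil π πstar = ∑ i, α i * avgTV ρtil π πstar := by
      rw [← Finset.sum_mul, hα_sum, one_mul]
    have h2 : ∑ i, α i * avgTV ρtil π πstar ≤
        ∑ i, α i * (avgTV (ρs i) π πG + avgTV (ρs i) πstar πG + δE) :=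
      Finset.sum_le_sum fun i _ => mul_le_mul_of_nonneg_left (hCD i) (hα_nonneg i)
    have h3 : ∑ i, α i * (avgTV (ρs i) π πG + avgTV (ρs i) πstar πG + δE) =
        (∑ i, α i * avgTV (ρs i) π πG) + (∑ i, α i * avgTV (ρs i) πstar πG) + δE := by
      simp only [mul_add, Finset.sum_add_distrib, ← Finset.sum_mul, hα_sum, one_mul]
    linarith
  linarith
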